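/- There is a bijection between the set X_n of noncrossing (1,2)-configurations of [n-1] and the set of Dyck paths from (0,0) to (n,n). -/

import Mathlib

open scoped Classical

def IsConfig (m : ℕ) (x : Finset (Finset ℕ)) : Prop :=
  (∀ B ∈ x, B ⊆ Finset.Icc 1 m ∧ (B.card = 1 ∨ B.card = 2)) ∧
  (∀ B ∈ x, ∀ C ∈ x, B ≠ C → Disjoint B C) ∧
  (∀ i₁ j₁ i₂ j₂ : ℕ, ({i₁, j₁} : Finset ℕ) ∈ x → ({i₂, j₂} : Finset ℕ) ∈ x →
    i₁ < i₂ → i₂ < j₁ → j₁ < j₂ → False)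

noncomputable def Configs (m : ℕ) : Finset (Finset (Finset ℕ)) :=
  ((Finset.Icc 1 m).powerset.powerset).filter (IsConfig m)

def majF (n : ℕ) (w : Fin n → Bool) : ℕ :=
  ∑ i ∈ Finset.range n,
    if h : i + 1 < n then
      (if w ⟨i, Nat.lt_of_succ_lt h⟩ = true ∧ w ⟨i + 1, h⟩ = false then i + 1 else 0)
    else 0

def IsDyckF (n : ℕ) (w : Fin (2 * n) → Bool) : Prop :=
  (Finset.univ.filter fun i => w i = true).card = n ∧
  ∀ k : ℕ, (Finset.univ.filter fun i : Fin (2 * n) => i.val < k ∧ w i = true).card ≤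
      (Finset.univ.filter fun i : Fin (2 * n) => i.val < k ∧ w i = false).card

section
open Finset
namespace CfgDyck

/-- number of elements of `X` that are `≤ i`. -/
noncomputable def oc (X : Finset ℕ) (i : ℕ) : ℕ := (X.filter (· ≤ i)).card

lemma oc_zero {m : ℕ} {X : Finset ℕ} (hX : X ⊆ Finset.Icc 1 m) : oc X 0 = 0 := by
  unfold oc
  rw [Finset.card_eq_zero]
  ext a; simp only [mem_filter, notMem_empty, iff_false]
  rintro ⟨ha, ha0⟩
  have := hX ha; simp [Finset.mem_Icc] at this; omega

lemma oc_succ (X : Finset ℕ) (i : ℕ) :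
    oc X (i + 1) = oc X i + if i + 1 ∈ X then 1 else 0 := by
  unfold oc
  by_cases h : i + 1 ∈ X
  · have : X.filter (· ≤ i + 1) = insert (i + 1) (X.filter (· ≤ i)) := by
      ext a; simp only [mem_filter, mem_insert]; constructor
      · rintro ⟨ha, hle⟩
        rcases Nat.lt_or_ge a (i+1) with h' | h'
        · exact Or.inr ⟨ha, by omega⟩
        · exact Or.inl (by omega)
      · rintro (rfl | ⟨ha, hle⟩) <;> exact ⟨by assumption, by omega⟩
    rw [this, Finset.card_insert_of_notMem (by simp)]
    simp [h]
  · have : X.filter (· ≤ i + 1) = X.filter (· ≤ i) := by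
      ext a; simp only [mem_filter]; constructor
      · rintro ⟨ha, hle⟩
        refine ⟨ha, ?_⟩
        rcases Nat.lt_or_ge a (i+1) with h' | h'
        · omega
        · exfalso; have : a = i + 1 := by omega
          exact h (this ▸ ha)
      · rintro ⟨ha, hle⟩; exact ⟨ha, by omega⟩
    rw [this]; simp [h]

lemma oc_top {m : ℕ} {X : Finset ℕ} (hX : X ⊆ Finset.Icc 1 m) : oc X m = X.card := by
  unfold oc
  congr 1
  apply Finset.filter_true_of_mem
  intro a ha; have := hX ha; simp [Finset.mem_Icc] at this; omega

lemma oc_le (X : Finset ℕ) {a b : ℕ} (hab : a ≤ b) : oc X a ≤ oc X b := by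
  apply Finset.card_le_card
  intro t ht; simp only [mem_filter] at ht ⊢; exact ⟨ht.1, le_trans ht.2 hab⟩

lemma oc_split (X : Finset ℕ) {a b : ℕ} (hab : a ≤ b) :
    oc X b = oc X a + (X.filter (fun t => a < t ∧ t ≤ b)).card := by
  unfold oc
  rw [← Finset.card_union_of_disjoint]
  · congr 1
    ext t; simp only [mem_filter, mem_union]
    by_cases ht : t ∈ X <;> simp [ht] <;> omega
  · rw [Finset.disjoint_left]
    intro t h1 h2
    simp only [mem_filter] at h1 h2
    omega

/-- the height/depth function. -/
noncomputable def dd (O C : Finset ℕ) (i : ℕ) : ℤ := (oc O i : ℤ) - (oc C i : ℤ)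

lemma dd_zero {m : ℕ} {O C : Finset ℕ} (hO : O ⊆ Finset.Icc 1 m) (hC : C ⊆ Finset.Icc 1 m) :
    dd O C 0 = 0 := by
  simp [dd, oc_zero hO, oc_zero hC]

lemma dd_succ (O C : Finset ℕ) (k : ℕ) :
    dd O C (k + 1) = dd O C k + (if k + 1 ∈ O then 1 else 0) - (if k + 1 ∈ C then 1 else 0) := by
  simp only [dd, oc_succ]
  push_cast
  by_cases h1 : k + 1 ∈ O <;> by_cases h2 : k + 1 ∈ C <;> simp [h1, h2] <;> ring

lemma dd_step_le (O C : Finset ℕ) (k : ℕ) : dd O C (k + 1) ≤ dd O C k + 1 := by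
  rw [dd_succ]; split_ifs <;> omega

/-- Discrete IVT going up: if `d a < v ≤ d b` then there is a first point `t` in `(a,b]`
where `d` reaches `v`; it is an "up" step, so `t ∈ O`. -/
lemma ivt (O C : Finset ℕ) {a b : ℕ} (v : ℤ) (hab : a ≤ b)
    (ha : dd O C a < v) (hb : v ≤ dd O C b) :
    ∃ t, a < t ∧ t ≤ b ∧ t ∈ O ∧ dd O C t = v ∧ ∀ u, a ≤ u → u < t → dd O C u < v := by
  set A := (Finset.Icc (a+1) b).filter (fun t => v ≤ dd O C t) with hA
  have hbA : b ∈ A := by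
    simp only [hA, mem_filter, Finset.mem_Icc]
    refine ⟨⟨?_, le_refl b⟩, hb⟩
    rcases Nat.eq_or_lt_of_le hab with rfl | h
    · exact absurd hb (not_le.mpr ha)
    · omega
  have hAne : A.Nonempty := ⟨b, hbA⟩
  set t := A.min' hAne with ht
  have htA : t ∈ A := A.min'_mem hAne
  simp only [hA, mem_filter, Finset.mem_Icc] at htA
  obtain ⟨⟨ht1, ht2⟩, ht3⟩ := htA
  have hmin : ∀ u, a ≤ u → u < t → dd O C u < v := by
    intro u hu1 hu2
    rcases Nat.eq_or_lt_of_le hu1 with rfl | h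
    · exact ha
    · by_contra hcon
      push_neg at hcon
      have : u ∈ A := by
        simp only [hA, mem_filter, Finset.mem_Icc]
        exact ⟨⟨h, by omega⟩, hcon⟩
      have := A.min'_le u this
      omega
  have htpred : dd O C (t - 1) < v := hmin (t-1) (by omega) (by omega)
  have hstep : dd O C t ≤ dd O C (t-1) + 1 := by
    have : t = (t - 1) + 1 := by omega
    rw [this]; exact dd_step_le O C (t-1)
  have heq : dd O C t = v := le_antisymm (by omega) ht3
  have htO : t ∈ O := by
    by_contra hcon
    have : t = (t - 1) + 1 := by omega
    rw [this] at heq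
    rw [dd_succ] at heq
    rw [← this] at heq
    simp [hcon] at heq
    split_ifs at heq <;> omega
  exact ⟨t, by omega, ht2, htO, heq, hmin⟩

noncomputable def cntT (f : ℕ → Bool) (k : ℕ) : ℕ :=
  ((Finset.range k).filter (fun j => f j = true)).card

lemma cntT_zero (f : ℕ → Bool) : cntT f 0 = 0 := by simp [cntT]

lemma cntT_succ (f : ℕ → Bool) (k : ℕ) :
    cntT f (k + 1) = cntT f k + if f k = true then 1 else 0 := by
  unfold cntT
  rw [Finset.range_add_one, Finset.filter_insert]
  split_ifs with h
  · rw [Finset.card_insert_of_notMem (by simp)]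
  · simp

lemma cntT_le (f : ℕ → Bool) (k : ℕ) : cntT f k ≤ k := by
  calc cntT f k ≤ (Finset.range k).card := Finset.card_filter_le _ _
  _ = k := Finset.card_range k

lemma cntT_congr {f g : ℕ → Bool} (k : ℕ) (h : ∀ j, j < k → f j = g j) :
    cntT f k = cntT g k := by
  unfold cntT
  congr 1
  apply Finset.filter_congr
  intro j hj; simp only [Finset.mem_range] at hj
  rw [h j hj]

/-- transfer between `Fin N` filters and `range` filters -/
lemma finT (N : ℕ) (f : ℕ → Bool) (k : ℕ) (b : Bool) :
    (Finset.univ.filter fun i : Fin N => i.val < k ∧ f i.val = b).card =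
      ((Finset.range (min k N)).filter fun j => f j = b).card := by
  apply Finset.card_bij (fun (a : Fin N) _ => a.val)
  · intro a ha
    simp only [Finset.mem_filter, Finset.mem_univ, true_and] at ha
    simp only [Finset.mem_filter, Finset.mem_range]
    exact ⟨lt_min ha.1 a.isLt, ha.2⟩
  · intro a _ b _ h; exact Fin.val_injective h
  · intro j hj
    simp only [Finset.mem_filter, Finset.mem_range, lt_min_iff] at hj
    exact ⟨⟨j, hj.1.2⟩, by simp [hj.1.1, hj.2], rfl⟩

lemma finT' (N : ℕ) (f : ℕ → Bool) (b : Bool) :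
    (Finset.univ.filter fun i : Fin N => f i.val = b).card =
      ((Finset.range N).filter fun j => f j = b).card := by
  have := finT N f N b
  simp only [min_self] at this
  rw [← this]
  congr 1
  apply Finset.filter_congr
  intro i _
  simp [i.isLt]

lemma cntF_eq (f : ℕ → Bool) (k : ℕ) :
    ((Finset.range k).filter fun j => f j = false).card = k - cntT f k := by
  have h := Finset.card_filter_add_card_filter_not
    (s := Finset.range k) (p := fun j => f j = true)
  simp only [Finset.card_range] at h
  have h2 : (Finset.filter (fun j => ¬ (f j = true)) (Finset.range k)).card
      = ((Finset.range k).filter fun j => f j = false).card := by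
    congr 1; apply Finset.filter_congr; intro j _; simp
  unfold cntT
  omega

/-- the two letters encoding the status of a point -/
noncomputable def slot1 (O C S : Finset ℕ) (i : ℕ) : Bool :=
  if i ∈ O then false else if i ∈ C then true else if i ∈ S then false else true
noncomputable def slot2 (O C S : Finset ℕ) (i : ℕ) : Bool :=
  if i ∈ O then false else if i ∈ C then true else if i ∈ S then true else false

/-- the Dyck word (as a function on ℕ) of a configuration with opener set `O`,
closer set `C`, singleton set `S` inside `[1,m]`. -/
noncomputable def wrd (O C S : Finset ℕ) (m : ℕ) : ℕ → Bool := fun k =>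
  if k = 0 then false
  else if 2 * m + 1 ≤ k then true
  else if k % 2 = 1 then slot1 O C S ((k+1)/2) else slot2 O C S ((k+1)/2)

lemma wrd_zero (O C S : Finset ℕ) (m : ℕ) : wrd O C S m 0 = false := by simp [wrd]

lemma wrd_last (O C S : Finset ℕ) (m k : ℕ) (h : 2*m+1 ≤ k) : wrd O C S m k = true := by
  unfold wrd
  rw [if_neg (by omega), if_pos h]

lemma wrd_odd (O C S : Finset ℕ) (m i : ℕ) (h1 : 1 ≤ i) (h2 : i ≤ m) :
    wrd O C S m (2*i-1) = slot1 O C S i := by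
  unfold wrd
  rw [if_neg (by omega), if_neg (by omega), if_pos (by omega)]
  congr 1; omega

lemma wrd_even (O C S : Finset ℕ) (m i : ℕ) (h1 : 1 ≤ i) (h2 : i ≤ m) :
    wrd O C S m (2*i) = slot2 O C S i := by
  unfold wrd
  rw [if_neg (by omega), if_neg (by omega), if_neg (by omega)]
  congr 1; omega

end CfgDyck
end
section
open scoped Classical
open Finset
namespace CfgDyck

lemma wrd_formula {m : ℕ} {O C S : Finset ℕ} (hO : O ⊆ Finset.Icc 1 m)
    (hC : C ⊆ Finset.Icc 1 m) (hS : S ⊆ Finset.Icc 1 m)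
    (hOC : Disjoint O C) (hOS : Disjoint O S) (hCS : Disjoint C S) :
    ∀ i, i ≤ m → cntT (wrd O C S m) (2*i+1) + oc O i = i + oc C i := by
  intro i
  induction i with
  | zero =>
    intro _
    have : (2*0+1) = 0 + 1 := by ring
    rw [this, cntT_succ, cntT_zero, wrd_zero]
    simp [oc_zero hO, oc_zero hC]
  | succ i ih =>
    intro h
    have IH := ih (by omega)
    have e1 : (2*(i+1)+1) = (2*i+1) + 1 + 1 := by ring
    rw [e1, cntT_succ, cntT_succ]
    have o1 : wrd O C S m (2*i+1) = slot1 O C S (i+1) := by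
      have := wrd_odd O C S m (i+1) (by omega) (by omega)
      convert this using 2 <;> omega
    have o2 : wrd O C S m (2*i+1+1) = slot2 O C S (i+1) := by
      have := wrd_even O C S m (i+1) (by omega) (by omega)
      convert this using 2 <;> omega
    rw [o1, o2, oc_succ O, oc_succ C]
    unfold slot1 slot2
    by_cases h1 : i+1 ∈ O
    · have h2 : i+1 ∉ C := Finset.disjoint_left.mp hOC h1
      simp only [h1, h2, if_true, if_false] <;> simp <;> omega
    · by_cases h2 : i+1 ∈ C
      · simp only [h1, h2, if_true, if_false] <;> simp <;> omega
      · by_cases h3 : i+1 ∈ S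
        · simp only [h1, h2, h3, if_true, if_false] <;> simp <;> omega
        · simp only [h1, h2, h3, if_true, if_false] <;> simp <;> omega

lemma cntT_prefix_le {m : ℕ} {O C S : Finset ℕ} (hO : O ⊆ Finset.Icc 1 m)
    (hC : C ⊆ Finset.Icc 1 m) (hS : S ⊆ Finset.Icc 1 m)
    (hOC : Disjoint O C) (hOS : Disjoint O S) (hCS : Disjoint C S)
    (hbal : ∀ i, oc C i ≤ oc O i) :
    ∀ K, K ≤ 2*m+2 → 2 * cntT (wrd O C S m) K ≤ K := by
  have hform := wrd_formula hO hC hS hOC hOS hCS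
  intro K hK
  obtain ⟨i, hi | hi⟩ := Nat.even_or_odd' K
  · subst hi
    rcases Nat.eq_zero_or_pos i with rfl | hpos
    · simp [cntT_zero]
    · have e : 2*i = (2*(i-1)+1) + 1 := by omega
      rw [e, cntT_succ]
      have h1 := hform (i-1) (by omega)
      have h2 := hbal (i-1)
      have h3 : cntT (wrd O C S m) (2*(i-1)+1) ≤ i - 1 := by omega
      split_ifs <;> omega
  · subst hi
    have h1 := hform i (by omega)
    have h2 := hbal i
    omega

lemma isDyck_wrd {m : ℕ} {O C S : Finset ℕ} (hO : O ⊆ Finset.Icc 1 m)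
    (hC : C ⊆ Finset.Icc 1 m) (hS : S ⊆ Finset.Icc 1 m)
    (hOC : Disjoint O C) (hOS : Disjoint O S) (hCS : Disjoint C S)
    (hbal : ∀ i, oc C i ≤ oc O i) (hcard : O.card = C.card) :
    IsDyckF (m+1) (fun i : Fin (2*(m+1)) => wrd O C S m i.val) := by
  have hform := wrd_formula hO hC hS hOC hOS hCS
  have hTm : cntT (wrd O C S m) (2*m+1) = m := by
    have h := hform m le_rfl
    rw [oc_top hO, oc_top hC] at h
    omega
  have hT2 : cntT (wrd O C S m) (2*m+2) = m + 1 := by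
    have e : 2*m+2 = (2*m+1)+1 := rfl
    rw [e, cntT_succ, wrd_last _ _ _ _ (2*m+1) le_rfl]
    simp [hTm]
  constructor
  · rw [finT' (2*(m+1)) (wrd O C S m) true]
    have e : 2*(m+1) = 2*m+2 := by ring
    rw [e]
    exact hT2
  · intro k
    rw [finT, finT, cntF_eq]
    have hle1 : min k (2*(m+1)) ≤ 2*m+2 := by
      have := min_le_right k (2*(m+1)); omega
    have main := cntT_prefix_le hO hC hS hOC hOS hCS hbal (min k (2*(m+1))) hle1
    have hb := cntT_le (wrd O C S m) (min k (2*(m+1)))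
    change cntT (wrd O C S m) (min k (2*(m+1))) ≤
      min k (2*(m+1)) - cntT (wrd O C S m) (min k (2*(m+1)))
    omega

end CfgDyck
end
section
open scoped Classical
open Finset
namespace CfgDyck

/-- the partner (opener) of a closer `j`, defined from the status sets only. -/
noncomputable def mu (O C : Finset ℕ) (j : ℕ) : ℕ :=
  if h : (O.filter (fun i => i < j ∧ dd O C i = dd O C (j-1))).Nonempty then
    (O.filter (fun i => i < j ∧ dd O C i = dd O C (j-1))).max' h
  else 0

section Mu
variable {m : ℕ} {O C : Finset ℕ}
variable (hO : O ⊆ Finset.Icc 1 m) (hC : C ⊆ Finset.Icc 1 m)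
variable (hOC : Disjoint O C) (hbal : ∀ i, oc C i ≤ oc O i)

include hO hC hOC hbal

lemma dd_nonneg (i : ℕ) : 0 ≤ dd O C i := by
  have := hbal i; simp [dd]; omega

lemma dd_closer {j : ℕ} (hj : j ∈ C) : dd O C j = dd O C (j-1) - 1 := by
  have hj1 : 1 ≤ j := by have := hC hj; simp [Finset.mem_Icc] at this; omega
  have hjO : j ∉ O := Finset.disjoint_right.mp hOC hj
  have e : j = (j - 1) + 1 := by omega
  rw [e, dd_succ, ← e]
  simp [hjO, hj]

lemma dd_pos_pred {j : ℕ} (hj : j ∈ C) : 1 ≤ dd O C (j-1) := by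
  have h1 := dd_closer hO hC hOC hbal hj
  have h2 := dd_nonneg hO hC hOC hbal j
  omega

lemma mu_nonempty {j : ℕ} (hj : j ∈ C) :
    (O.filter (fun i => i < j ∧ dd O C i = dd O C (j-1))).Nonempty := by
  have hj1 : 1 ≤ j := by have := hC hj; simp [Finset.mem_Icc] at this; omega
  have h0 : dd O C 0 < dd O C (j-1) := by
    rw [dd_zero hO hC]; exact dd_pos_pred hO hC hOC hbal hj
  obtain ⟨t, ht1, ht2, ht3, ht4, -⟩ :=
    ivt O C (dd O C (j-1)) (Nat.zero_le (j-1)) h0 le_rfl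
  exact ⟨t, by simp only [Finset.mem_filter]; exact ⟨ht3, by omega, ht4⟩⟩

lemma mu_spec {j : ℕ} (hj : j ∈ C) :
    mu O C j ∈ O ∧ mu O C j < j ∧ dd O C (mu O C j) = dd O C (j-1) := by
  have hne := mu_nonempty hO hC hOC hbal hj
  have : mu O C j ∈ (O.filter (fun i => i < j ∧ dd O C i = dd O C (j-1))) := by
    rw [mu, dif_pos hne]; exact Finset.max'_mem _ hne
  simp only [Finset.mem_filter] at this
  exact ⟨this.1, this.2.1, this.2.2⟩

lemma mu_max {j : ℕ} (hj : j ∈ C) {a : ℕ} (ha : a ∈ O) (h1 : a < j)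
    (h2 : dd O C a = dd O C (j-1)) : a ≤ mu O C j := by
  have hne := mu_nonempty hO hC hOC hbal hj
  rw [mu, dif_pos hne]
  exact Finset.le_max' _ a (by simp only [Finset.mem_filter]; exact ⟨ha, h1, h2⟩)

/-- interval property: between `mu j` and `j` the height stays at least `dd (j-1)`. -/
lemma mu_interval {j : ℕ} (hj : j ∈ C) {k : ℕ} (h1 : mu O C j ≤ k) (h2 : k < j) :
    dd O C (j-1) ≤ dd O C k := by
  by_contra hcon
  push_neg at hcon
  obtain ⟨t, ht1, ht2, ht3, ht4, -⟩ :=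
    ivt O C (dd O C (j-1)) (show k ≤ j-1 by omega) hcon le_rfl
  have := mu_max hO hC hOC hbal hj ht3 (by omega) ht4
  omega

/-- strict maximality: no opener strictly between `mu j` and `j` is at the same height. -/
lemma mu_strict {j : ℕ} (hj : j ∈ C) {a : ℕ} (ha : a ∈ O) (h1 : mu O C j < a)
    (h2 : a < j) : dd O C (j-1) < dd O C a := by
  have hle := mu_interval hO hC hOC hbal hj (le_of_lt h1) h2
  rcases lt_or_eq_of_le hle with h | h
  · exact h
  · exfalso
    have := mu_max hO hC hOC hbal hj ha h2 h.symm
    omega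

/-- uniqueness characterization of `mu`. -/
lemma mu_char {j : ℕ} (hj : j ∈ C) {i : ℕ} (hi : i ∈ O) (hij : i < j)
    (h1 : dd O C i = dd O C (j-1))
    (h2 : ∀ a ∈ O, i < a → a < j → dd O C i < dd O C a) : mu O C j = i := by
  have hle := mu_max hO hC hOC hbal hj hi hij h1
  rcases lt_or_eq_of_le hle with h | h
  · exfalso
    obtain ⟨hm1, hm2, hm3⟩ := mu_spec hO hC hOC hbal hj
    have := h2 (mu O C j) hm1 h hm2
    omega
  · exact h.symm

/-- `mu` is injective on closers. -/
lemma mu_inj {j1 j2 : ℕ} (hj1 : j1 ∈ C) (hj2 : j2 ∈ C)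
    (h : mu O C j1 = mu O C j2) : j1 = j2 := by
  by_contra hne
  wlog hlt : j1 < j2 generalizing j1 j2
  · exact this hj2 hj1 h.symm (Ne.symm hne) (by omega)
  obtain ⟨ha1, ha2, ha3⟩ := mu_spec hO hC hOC hbal hj1
  obtain ⟨hb1, hb2, hb3⟩ := mu_spec hO hC hOC hbal hj2
  have hk : dd O C (j2-1) ≤ dd O C j1 := by
    apply mu_interval hO hC hOC hbal hj2 _ (by omega)
    rw [← h]; omega
  have hcl : dd O C j1 = dd O C (j1-1) - 1 := dd_closer hO hC hOC hbal hj1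
  rw [← h] at hb3
  omega

/-- noncrossing property of the `mu`-matching. -/
lemma mu_noncross {j1 j2 : ℕ} (hj1 : j1 ∈ C) (hj2 : j2 ∈ C)
    (h1 : mu O C j1 < mu O C j2) (h2 : mu O C j2 < j1) (h3 : j1 < j2) : False := by
  obtain ⟨ha1, ha2, ha3⟩ := mu_spec hO hC hOC hbal hj1
  obtain ⟨hb1, hb2, hb3⟩ := mu_spec hO hC hOC hbal hj2
  have hstrict : dd O C (j1-1) < dd O C (mu O C j2) :=
    mu_strict hO hC hOC hbal hj1 hb1 h1 h2
  have hint : dd O C (j2-1) ≤ dd O C (j1-1) := by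
    apply mu_interval hO hC hOC hbal hj2 (by omega) (by omega)
  omega

end Mu
end CfgDyck
end
section
open scoped Classical
open Finset
namespace CfgDyck

noncomputable def Ox (m : ℕ) (x : Finset (Finset ℕ)) : Finset ℕ :=
  (Finset.Icc 1 m).filter (fun i => ∃ j, i < j ∧ ({i, j} : Finset ℕ) ∈ x)
noncomputable def Cx (m : ℕ) (x : Finset (Finset ℕ)) : Finset ℕ :=
  (Finset.Icc 1 m).filter (fun j => ∃ i, i < j ∧ ({i, j} : Finset ℕ) ∈ x)
noncomputable def Sx (m : ℕ) (x : Finset (Finset ℕ)) : Finset ℕ :=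
  (Finset.Icc 1 m).filter (fun i => ({i} : Finset ℕ) ∈ x)

noncomputable def mkCfg (O C S : Finset ℕ) : Finset (Finset ℕ) :=
  S.image (fun s => ({s} : Finset ℕ)) ∪ C.image (fun j => ({mu O C j, j} : Finset ℕ))

lemma pair_eq_pair {a b c d : ℕ} (h : ({a, b} : Finset ℕ) = {c, d})
    (h1 : a < b) (h2 : c < d) : a = c ∧ b = d := by
  have ha : a = c ∨ a = d := by
    have : a ∈ ({c, d} : Finset ℕ) := by rw [← h]; simp
    simpa using this
  have hb : b = c ∨ b = d := by
    have : b ∈ ({c, d} : Finset ℕ) := by rw [← h]; simp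
    simpa using this
  have hc : c = a ∨ c = b := by
    have : c ∈ ({a, b} : Finset ℕ) := by rw [h]; simp
    simpa using this
  omega

lemma mem_mkCfg {O C S : Finset ℕ} {B : Finset ℕ} :
    B ∈ mkCfg O C S ↔ (∃ s ∈ S, B = {s}) ∨ (∃ j ∈ C, B = {mu O C j, j}) := by
  simp only [mkCfg, mem_union, mem_image]
  constructor
  · rintro (⟨s, hs, rfl⟩ | ⟨j, hj, rfl⟩)
    · exact Or.inl ⟨s, hs, rfl⟩
    · exact Or.inr ⟨j, hj, rfl⟩
  · rintro (⟨s, hs, rfl⟩ | ⟨j, hj, rfl⟩)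
    · exact Or.inl ⟨s, hs, rfl⟩
    · exact Or.inr ⟨j, hj, rfl⟩

section MkCfg
variable {m : ℕ} {O C S : Finset ℕ}
variable (hO : O ⊆ Finset.Icc 1 m) (hC : C ⊆ Finset.Icc 1 m) (hS : S ⊆ Finset.Icc 1 m)
variable (hOC : Disjoint O C) (hOS : Disjoint O S) (hCS : Disjoint C S)
variable (hbal : ∀ i, oc C i ≤ oc O i) (hcard : O.card = C.card)

include hO hC hOC hbal

lemma pair_in_mkCfg {a b : ℕ} (hmem : ({a, b} : Finset ℕ) ∈ mkCfg O C S)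
    (hab : a < b) : b ∈ C ∧ a = mu O C b := by
  rw [mem_mkCfg] at hmem
  rcases hmem with ⟨s, hs, heq⟩ | ⟨j, hj, heq⟩
  · exfalso
    have ha : a ∈ ({s} : Finset ℕ) := by rw [← heq]; simp
    have hb : b ∈ ({s} : Finset ℕ) := by rw [← heq]; simp
    simp at ha hb; omega
  · obtain ⟨h1, h2, h3⟩ := mu_spec hO hC hOC hbal hj
    obtain ⟨e1, e2⟩ := pair_eq_pair heq hab h2
    subst e2
    exact ⟨hj, e1⟩

include hcard in
lemma mu_image : C.image (mu O C) = O := by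
  apply Finset.eq_of_subset_of_card_le
  · intro a ha
    simp only [mem_image] at ha
    obtain ⟨j, hj, rfl⟩ := ha
    exact (mu_spec hO hC hOC hbal hj).1
  · rw [Finset.card_image_of_injOn
      (fun j1 h1 j2 h2 h => mu_inj hO hC hOC hbal h1 h2 h)]
    omega

include hS hOS hCS

lemma mkCfg_isConfig : IsConfig m (mkCfg O C S) := by
  refine ⟨?_, ?_, ?_⟩
  · intro B hB
    rw [mem_mkCfg] at hB
    rcases hB with ⟨s, hs, rfl⟩ | ⟨j, hj, rfl⟩
    · exact ⟨by simp only [Finset.singleton_subset_iff]; exact hS hs, Or.inl (by simp)⟩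
    · obtain ⟨h1, h2, h3⟩ := mu_spec hO hC hOC hbal hj
      refine ⟨?_, Or.inr ?_⟩
      · intro a ha
        simp only [mem_insert, mem_singleton] at ha
        rcases ha with rfl | rfl
        · exact hO h1
        · exact hC hj
      · rw [Finset.card_insert_of_notMem (by simp; omega), Finset.card_singleton]
  · intro B hB B' hB' hne
    rw [Finset.disjoint_left]
    intro a haB haB'
    apply hne
    rw [mem_mkCfg] at hB hB'
    rcases hB with ⟨s, hs, rfl⟩ | ⟨j, hj, rfl⟩ <;>
      rcases hB' with ⟨s', hs', rfl⟩ | ⟨j', hj', rfl⟩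
    · simp only [mem_singleton] at haB haB'
      subst haB; subst haB'; rfl
    · exfalso
      simp only [mem_singleton] at haB
      subst haB
      simp only [mem_insert, mem_singleton] at haB'
      obtain ⟨h1, h2, h3⟩ := mu_spec hO hC hOC hbal hj'
      rcases haB' with rfl | rfl
      · exact Finset.disjoint_left.mp hOS h1 hs
      · exact Finset.disjoint_left.mp hCS hj' hs
    · exfalso
      simp only [mem_singleton] at haB'
      subst haB'
      simp only [mem_insert, mem_singleton] at haB
      obtain ⟨h1, h2, h3⟩ := mu_spec hO hC hOC hbal hj
      rcases haB with rfl | rfl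
      · exact Finset.disjoint_left.mp hOS h1 hs'
      · exact Finset.disjoint_left.mp hCS hj hs'
    · obtain ⟨h1, h2, h3⟩ := mu_spec hO hC hOC hbal hj
      obtain ⟨h1', h2', h3'⟩ := mu_spec hO hC hOC hbal hj'
      simp only [mem_insert, mem_singleton] at haB haB'
      have hjj' : j = j' := by
        rcases haB with rfl | rfl <;> rcases haB' with h | h
        · exact mu_inj hO hC hOC hbal hj hj' h
        · exact absurd hj' (Finset.disjoint_left.mp hOC (h ▸ h1))
        · exact absurd hj (Finset.disjoint_left.mp hOC (h.symm ▸ h1'))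
        · exact h
      rw [hjj']
  · intro i1 j1 i2 j2 h1 h2 hlt1 hlt2 hlt3
    have e1 := pair_in_mkCfg hO hC hOC hbal h1 (by omega)
    have e2 := pair_in_mkCfg hO hC hOC hbal h2 (by omega)
    exact mu_noncross hO hC hOC hbal e1.1 e2.1
      (by rw [← e1.2, ← e2.2]; omega) (by rw [← e2.2]; omega) hlt3

include hcard

lemma Ox_mkCfg : Ox m (mkCfg O C S) = O := by
  ext a
  simp only [Ox, mem_filter, Finset.mem_Icc]
  constructor
  · rintro ⟨hIcc, j, hlt, hmem⟩
    obtain ⟨hjC, rfl⟩ := pair_in_mkCfg hO hC hOC hbal hmem hlt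
    exact (mu_spec hO hC hOC hbal hjC).1
  · intro ha
    have himg : a ∈ C.image (mu O C) := by
      rw [mu_image hO hC hOC hbal hcard]; exact ha
    simp only [mem_image] at himg
    obtain ⟨j, hj, rfl⟩ := himg
    obtain ⟨hm1, hm2, hm3⟩ := mu_spec hO hC hOC hbal hj
    have hIcc := hO hm1
    simp only [Finset.mem_Icc] at hIcc
    refine ⟨hIcc, j, hm2, ?_⟩
    rw [mem_mkCfg]
    exact Or.inr ⟨j, hj, rfl⟩

omit hcard in
lemma Cx_mkCfg : Cx m (mkCfg O C S) = C := by
  ext b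
  simp only [Cx, mem_filter, Finset.mem_Icc]
  constructor
  · rintro ⟨hIcc, i, hlt, hmem⟩
    exact (pair_in_mkCfg hO hC hOC hbal hmem hlt).1
  · intro hb
    obtain ⟨hm1, hm2, hm3⟩ := mu_spec hO hC hOC hbal hb
    have hIcc := hC hb
    simp only [Finset.mem_Icc] at hIcc
    refine ⟨hIcc, mu O C b, hm2, ?_⟩
    rw [mem_mkCfg]
    exact Or.inr ⟨b, hb, rfl⟩

omit hcard in
lemma Sx_mkCfg : Sx m (mkCfg O C S) = S := by
  ext a
  simp only [Sx, mem_filter, Finset.mem_Icc]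
  constructor
  · rintro ⟨hIcc, hmem⟩
    rw [mem_mkCfg] at hmem
    rcases hmem with ⟨s, hs, heq⟩ | ⟨j, hj, heq⟩
    · have : a = s := by
        have : a ∈ ({s} : Finset ℕ) := by rw [← heq]; simp
        simpa using this
      subst this; exact hs
    · exfalso
      obtain ⟨hm1, hm2, hm3⟩ := mu_spec hO hC hOC hbal hj
      have hcard1 : ({a} : Finset ℕ).card = 1 := by simp
      rw [heq] at hcard1
      rw [Finset.card_insert_of_notMem (by simp; omega), Finset.card_singleton] at hcard1
      omega
  · intro ha
    have hIcc := hS ha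
    simp only [Finset.mem_Icc] at hIcc
    refine ⟨hIcc, ?_⟩
    rw [mem_mkCfg]
    exact Or.inl ⟨a, ha, rfl⟩

end MkCfg
end CfgDyck
end
section
open scoped Classical
open Finset
namespace CfgDyck

noncomputable def opOf (x : Finset (Finset ℕ)) (j : ℕ) : ℕ :=
  Nat.findGreatest (fun i => i < j ∧ ({i, j} : Finset ℕ) ∈ x) j
noncomputable def clOf (m : ℕ) (x : Finset (Finset ℕ)) (i : ℕ) : ℕ :=
  Nat.findGreatest (fun j => i < j ∧ ({i, j} : Finset ℕ) ∈ x) (m + 1)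

section Cfg
variable {m : ℕ} {x : Finset (Finset ℕ)} (hx : IsConfig m x)

include hx

lemma pair_unique_left {i i' j : ℕ} (h1 : ({i, j} : Finset ℕ) ∈ x)
    (h2 : ({i', j} : Finset ℕ) ∈ x) (hij : i < j) (hij' : i' < j) : i = i' := by
  by_contra hne
  have hBne : ({i, j} : Finset ℕ) ≠ {i', j} := fun h => hne (pair_eq_pair h hij hij').1
  have hd := hx.2.1 _ h1 _ h2 hBne
  rw [Finset.disjoint_left] at hd
  exact hd (a := j) (by simp) (by simp)

lemma pair_unique_right {i j j' : ℕ} (h1 : ({i, j} : Finset ℕ) ∈ x)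
    (h2 : ({i, j'} : Finset ℕ) ∈ x) (hij : i < j) (hij' : i < j') : j = j' := by
  by_contra hne
  have hBne : ({i, j} : Finset ℕ) ≠ {i, j'} := fun h => hne (pair_eq_pair h hij hij').2
  have hd := hx.2.1 _ h1 _ h2 hBne
  rw [Finset.disjoint_left] at hd
  exact hd (a := i) (by simp) (by simp)

omit hx in
lemma Ox_subset : Ox m x ⊆ Finset.Icc 1 m := Finset.filter_subset _ _
omit hx in
lemma Cx_subset : Cx m x ⊆ Finset.Icc 1 m := Finset.filter_subset _ _
omit hx in
lemma Sx_subset : Sx m x ⊆ Finset.Icc 1 m := Finset.filter_subset _ _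

lemma hOC_x : Disjoint (Ox m x) (Cx m x) := by
  rw [Finset.disjoint_left]
  intro a ha hc
  simp only [Ox, Cx, mem_filter] at ha hc
  obtain ⟨-, j, haj, h1⟩ := ha
  obtain ⟨-, i, hia, h2⟩ := hc
  have hne : ({a, j} : Finset ℕ) ≠ {i, a} := by
    intro h
    have : j ∈ ({i, a} : Finset ℕ) := by rw [← h]; simp
    simp at this; omega
  have hd := hx.2.1 _ h1 _ h2 hne
  rw [Finset.disjoint_left] at hd
  exact hd (a := a) (by simp) (by simp)

lemma hOS_x : Disjoint (Ox m x) (Sx m x) := by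
  rw [Finset.disjoint_left]
  intro a ha hs
  simp only [Ox, Sx, mem_filter] at ha hs
  obtain ⟨-, j, haj, h1⟩ := ha
  have hne : ({a, j} : Finset ℕ) ≠ {a} := by
    intro h
    have : j ∈ ({a} : Finset ℕ) := by rw [← h]; simp
    simp at this; omega
  have hd := hx.2.1 _ h1 _ hs.2 hne
  rw [Finset.disjoint_left] at hd
  exact hd (a := a) (by simp) (by simp)

lemma hCS_x : Disjoint (Cx m x) (Sx m x) := by
  rw [Finset.disjoint_left]
  intro a ha hs
  simp only [Cx, Sx, mem_filter] at ha hs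
  obtain ⟨-, i, hia, h1⟩ := ha
  have hne : ({i, a} : Finset ℕ) ≠ {a} := by
    intro h
    have : i ∈ ({a} : Finset ℕ) := by rw [← h]; simp
    simp at this; omega
  have hd := hx.2.1 _ h1 _ hs.2 hne
  rw [Finset.disjoint_left] at hd
  exact hd (a := a) (by simp) (by simp)

omit hx in
lemma opOf_spec {j : ℕ} (hj : j ∈ Cx m x) :
    opOf x j < j ∧ ({opOf x j, j} : Finset ℕ) ∈ x := by
  simp only [Cx, mem_filter] at hj
  obtain ⟨-, i, hij, hmem⟩ := hj
  exact Nat.findGreatest_spec (P := fun i => i < j ∧ ({i, j} : Finset ℕ) ∈ x)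
    (le_of_lt hij) ⟨hij, hmem⟩

lemma opOf_eq {i j : ℕ} (h : ({i, j} : Finset ℕ) ∈ x) (hij : i < j) : opOf x j = i := by
  have hsp := Nat.findGreatest_spec (P := fun i => i < j ∧ ({i, j} : Finset ℕ) ∈ x)
    (le_of_lt hij) ⟨hij, h⟩
  exact pair_unique_left hx hsp.2 h hsp.1 hij

lemma clOf_spec {i : ℕ} (hi : i ∈ Ox m x) :
    i < clOf m x i ∧ ({i, clOf m x i} : Finset ℕ) ∈ x := by
  simp only [Ox, mem_filter] at hi
  obtain ⟨-, j, hij, hmem⟩ := hi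
  have hjm : j ≤ m + 1 := by
    have hsub := (hx.1 _ hmem).1
    have : j ∈ Finset.Icc 1 m := hsub (by simp)
    simp [Finset.mem_Icc] at this; omega
  exact Nat.findGreatest_spec (P := fun j => i < j ∧ ({i, j} : Finset ℕ) ∈ x)
    hjm ⟨hij, hmem⟩

lemma clOf_eq {i j : ℕ} (h : ({i, j} : Finset ℕ) ∈ x) (hij : i < j) : clOf m x i = j := by
  have hiO : i ∈ Ox m x := by
    simp only [Ox, mem_filter]
    have hsub := (hx.1 _ h).1
    have : i ∈ Finset.Icc 1 m := hsub (by simp)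
    exact ⟨this, j, hij, h⟩
  obtain ⟨h1, h2⟩ := clOf_spec hx hiO
  exact pair_unique_right hx h2 h h1 hij

lemma opOf_mem_Ox {j : ℕ} (hj : j ∈ Cx m x) : opOf x j ∈ Ox m x := by
  obtain ⟨h1, h2⟩ := opOf_spec hj
  simp only [Ox, mem_filter]
  have hsub := (hx.1 _ h2).1
  have : opOf x j ∈ Finset.Icc 1 m := hsub (by simp)
  exact ⟨this, j, h1, h2⟩

lemma clOf_mem_Cx {i : ℕ} (hi : i ∈ Ox m x) : clOf m x i ∈ Cx m x := by
  obtain ⟨h1, h2⟩ := clOf_spec hx hi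
  simp only [Cx, mem_filter]
  have hsub := (hx.1 _ h2).1
  have : clOf m x i ∈ Finset.Icc 1 m := hsub (by simp)
  exact ⟨this, i, h1, h2⟩

lemma hbal_x : ∀ i, oc (Cx m x) i ≤ oc (Ox m x) i := by
  intro i
  apply Finset.card_le_card_of_injOn (opOf x)
  · intro j hj
    simp only [mem_coe, mem_filter] at hj ⊢
    obtain ⟨hjC, hjle⟩ := hj
    refine ⟨opOf_mem_Ox hx hjC, ?_⟩
    have := (opOf_spec hjC).1
    omega
  · intro j1 h1 j2 h2 heq
    simp only [coe_filter, Set.mem_setOf_eq] at h1 h2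
    obtain ⟨ho1, -⟩ := opOf_spec h1.1
    obtain ⟨ho2, -⟩ := opOf_spec h2.1
    have hm1 := (opOf_spec h1.1).2
    have hm2 := (opOf_spec h2.1).2
    rw [heq] at hm1 ho1
    exact pair_unique_right hx hm1 hm2 ho1 ho2

lemma hcard_x : (Ox m x).card = (Cx m x).card := by
  apply Finset.card_bij (fun i _ => clOf m x i)
  · intro i hi; exact clOf_mem_Cx hx hi
  · intro i1 h1 i2 h2 heq
    obtain ⟨ho1, hm1⟩ := clOf_spec hx h1
    obtain ⟨ho2, hm2⟩ := clOf_spec hx h2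
    rw [heq] at hm1 ho1
    exact pair_unique_left hx hm1 hm2 ho1 ho2
  · intro j hj
    refine ⟨opOf x j, opOf_mem_Ox hx hj, ?_⟩
    obtain ⟨h1, h2⟩ := opOf_spec hj
    exact clOf_eq hx h2 h1

/-- an opener strictly inside a pair has its closer strictly inside as well. -/
lemma opener_internal {i j a : ℕ} (hij : ({i, j} : Finset ℕ) ∈ x) (hlt : i < j)
    (ha : a ∈ Ox m x) (h1 : i < a) (h2 : a < j) :
    i < clOf m x a ∧ clOf m x a < j := by
  obtain ⟨hb1, hb2⟩ := clOf_spec hx ha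
  set b := clOf m x a with hb
  have hbj : b ≠ j := by
    intro h
    rw [h] at hb2
    have := pair_unique_left hx hb2 hij (by omega) hlt
    omega
  have hbltj : b < j := by
    rcases Nat.lt_or_ge b j with h | h
    · exact h
    · exfalso
      exact hx.2.2 i j a b hij hb2 h1 h2 (by omega)
  exact ⟨by omega, hbltj⟩

/-- a closer strictly inside a pair has its opener strictly inside as well. -/
lemma closer_internal {i j b : ℕ} (hij : ({i, j} : Finset ℕ) ∈ x) (hlt : i < j)
    (hb : b ∈ Cx m x) (h1 : i < b) (h2 : b < j) :
    i < opOf x b ∧ opOf x b < b := by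
  obtain ⟨ha1, ha2⟩ := opOf_spec hb
  set a := opOf x b with ha
  have hai : a ≠ i := by
    intro h
    rw [h] at ha2
    have := pair_unique_right hx ha2 hij (by omega) hlt
    omega
  have hagt : i < a := by
    rcases Nat.lt_or_ge i a with h | h
    · exact h
    · exfalso
      exact hx.2.2 a b i j ha2 hij (by omega) h1 h2
  exact ⟨hagt, ha1⟩

end Cfg
end CfgDyck
end
section
open scoped Classical
open Finset
namespace CfgDyck

section Cfg2
variable {m : ℕ} {x : Finset (Finset ℕ)} (hx : IsConfig m x)

include hx

/-- the interval strictly inside a pair of the configuration is balanced. -/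
lemma dd_pair {i j : ℕ} (hij : ({i, j} : Finset ℕ) ∈ x) (hlt : i < j) :
    dd (Ox m x) (Cx m x) (j - 1) = dd (Ox m x) (Cx m x) i := by
  have hij1 : i ≤ j - 1 := by omega
  have hsO := oc_split (Ox m x) hij1
  have hsC := oc_split (Cx m x) hij1
  have hcards : ((Ox m x).filter (fun t => i < t ∧ t ≤ j - 1)).card =
      ((Cx m x).filter (fun t => i < t ∧ t ≤ j - 1)).card := by
    apply Finset.card_bij (fun a _ => clOf m x a)
    · intro a ha
      simp only [mem_filter] at ha ⊢
      obtain ⟨haO, h1, h2⟩ := ha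
      obtain ⟨hc1, hc2⟩ := opener_internal hx hij hlt haO h1 (by omega)
      exact ⟨clOf_mem_Cx hx haO, by omega, by omega⟩
    · intro a1 h1 a2 h2 heq
      simp only [mem_filter] at h1 h2
      obtain ⟨hc1, hm1⟩ := clOf_spec hx h1.1
      obtain ⟨hc2, hm2⟩ := clOf_spec hx h2.1
      rw [heq] at hm1 hc1
      exact pair_unique_left hx hm1 hm2 hc1 hc2
    · intro b hb
      simp only [mem_filter] at hb
      obtain ⟨hbC, h1, h2⟩ := hb
      obtain ⟨ho1, ho2⟩ := closer_internal hx hij hlt hbC h1 (by omega)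
      obtain ⟨hsp1, hsp2⟩ := opOf_spec hbC
      refine ⟨opOf x b, ?_, clOf_eq hx hsp2 hsp1⟩
      simp only [mem_filter]
      exact ⟨opOf_mem_Ox hx hbC, by omega, by omega⟩
  simp only [dd]
  omega

/-- an opener strictly inside a pair is at strictly larger height than the left end. -/
lemma dd_opener_mid {i j a : ℕ} (hij : ({i, j} : Finset ℕ) ∈ x) (hlt : i < j)
    (ha : a ∈ Ox m x) (h1 : i < a) (h2 : a < j) :
    dd (Ox m x) (Cx m x) i < dd (Ox m x) (Cx m x) a := by
  have hia : i ≤ a := by omega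
  have hsO := oc_split (Ox m x) hia
  have hsC := oc_split (Cx m x) hia
  set OI := (Ox m x).filter (fun t => i < t ∧ t ≤ a) with hOI
  set CI := (Cx m x).filter (fun t => i < t ∧ t ≤ a) with hCI
  have haOI : a ∈ OI := by simp only [hOI, mem_filter]; exact ⟨ha, h1, le_refl a⟩
  have hle : CI.card ≤ (OI.erase a).card := by
    apply Finset.card_le_card_of_injOn (opOf x)
    · intro b hb
      simp only [hCI, mem_coe, mem_filter] at hb ⊢
      obtain ⟨hbC, hb1, hb2⟩ := hb
      have hba : b ≠ a := by
        intro h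
        exact Finset.disjoint_left.mp (hOC_x hx) ha (h ▸ hbC)
      obtain ⟨ho1, ho2⟩ := closer_internal hx hij hlt hbC hb1 (by omega)
      apply Finset.mem_erase_of_ne_of_mem (by omega)
      simp only [hOI, mem_filter]
      exact ⟨opOf_mem_Ox hx hbC, by omega, by omega⟩
    · intro b1 h1' b2 h2' heq
      simp only [hCI, coe_filter, Set.mem_setOf_eq] at h1' h2'
      obtain ⟨ho1, -⟩ := opOf_spec h1'.1
      obtain ⟨ho2, -⟩ := opOf_spec h2'.1
      have hm1 := (opOf_spec h1'.1).2
      have hm2 := (opOf_spec h2'.1).2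
      rw [heq] at hm1 ho1
      exact pair_unique_right hx hm1 hm2 ho1 ho2
  rw [Finset.card_erase_of_mem haOI] at hle
  have hOIpos : 1 ≤ OI.card := Finset.card_pos.mpr ⟨a, haOI⟩
  simp only [dd]
  omega

lemma mu_eq_opOf {j : ℕ} (hj : j ∈ Cx m x) :
    mu (Ox m x) (Cx m x) j = opOf x j := by
  obtain ⟨hsp1, hsp2⟩ := opOf_spec hj
  apply mu_char Ox_subset Cx_subset (hOC_x hx) (hbal_x hx) hj
    (opOf_mem_Ox hx hj) hsp1
  · exact (dd_pair hx hsp2 hsp1).symm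
  · intro a ha hlt1 hlt2
    exact dd_opener_mid hx hsp2 hsp1 ha hlt1 hlt2

/-- Reconstructing the configuration from its statuses gives it back. -/
lemma mkCfg_eq : mkCfg (Ox m x) (Cx m x) (Sx m x) = x := by
  ext B
  rw [mem_mkCfg]
  constructor
  · rintro (⟨s, hs, rfl⟩ | ⟨j, hj, rfl⟩)
    · simp only [Sx, mem_filter] at hs
      exact hs.2
    · rw [mu_eq_opOf hx hj]
      exact (opOf_spec hj).2
  · intro hB
    rcases (hx.1 B hB) with ⟨hsub, hc1 | hc2⟩
    · obtain ⟨s, rfl⟩ := Finset.card_eq_one.mp hc1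
      refine Or.inl ⟨s, ?_, rfl⟩
      simp only [Sx, mem_filter]
      exact ⟨hsub (by simp), hB⟩
    · obtain ⟨a, b, hab, rfl⟩ := Finset.card_eq_two.mp hc2
      rcases Nat.lt_or_ge a b with hlt | hge
      · have hbC : b ∈ Cx m x := by
          simp only [Cx, mem_filter]
          exact ⟨hsub (by simp), a, hlt, hB⟩
        refine Or.inr ⟨b, hbC, ?_⟩
        rw [mu_eq_opOf hx hbC, opOf_eq hx hB hlt]
      · have hlt : b < a := by omega
        rw [Finset.pair_comm] at hB ⊢
        have haC : a ∈ Cx m x := by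
          simp only [Cx, mem_filter]
          exact ⟨hsub (by simp), b, hlt, hB⟩
        refine Or.inr ⟨a, haC, ?_⟩
        rw [mu_eq_opOf hx haC, opOf_eq hx hB hlt]

end Cfg2
end CfgDyck
end
section
open scoped Classical
open Finset
namespace CfgDyck

noncomputable def wn (m : ℕ) (w : Fin (2*(m+1)) → Bool) : ℕ → Bool :=
  fun k => if h : k < 2*(m+1) then w ⟨k, h⟩ else true

noncomputable def Ow (m : ℕ) (w : Fin (2*(m+1)) → Bool) : Finset ℕ :=
  (Finset.Icc 1 m).filter (fun i => wn m w (2*i-1) = false ∧ wn m w (2*i) = false)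
noncomputable def Cw (m : ℕ) (w : Fin (2*(m+1)) → Bool) : Finset ℕ :=
  (Finset.Icc 1 m).filter (fun i => wn m w (2*i-1) = true ∧ wn m w (2*i) = true)
noncomputable def Sw (m : ℕ) (w : Fin (2*(m+1)) → Bool) : Finset ℕ :=
  (Finset.Icc 1 m).filter (fun i => wn m w (2*i-1) = false ∧ wn m w (2*i) = true)

lemma oc_ge {m : ℕ} {X : Finset ℕ} (hX : X ⊆ Finset.Icc 1 m) {i : ℕ} (h : m ≤ i) :
    oc X i = X.card := by
  unfold oc
  congr 1
  apply Finset.filter_true_of_mem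
  intro a ha; have := hX ha; simp [Finset.mem_Icc] at this; omega

section Word
variable {m : ℕ} {w : Fin (2*(m+1)) → Bool}

lemma Ow_subset : Ow m w ⊆ Finset.Icc 1 m := Finset.filter_subset _ _
lemma Cw_subset : Cw m w ⊆ Finset.Icc 1 m := Finset.filter_subset _ _
lemma Sw_subset : Sw m w ⊆ Finset.Icc 1 m := Finset.filter_subset _ _

lemma hOC_w : Disjoint (Ow m w) (Cw m w) := by
  rw [Finset.disjoint_left]
  intro a ha hc
  simp only [Ow, Cw, mem_filter] at ha hc
  rw [ha.2.1] at hc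
  exact absurd hc.2.1 (by simp)

lemma hOS_w : Disjoint (Ow m w) (Sw m w) := by
  rw [Finset.disjoint_left]
  intro a ha hc
  simp only [Ow, Sw, mem_filter] at ha hc
  rw [ha.2.2] at hc
  exact absurd hc.2.2 (by simp)

lemma hCS_w : Disjoint (Cw m w) (Sw m w) := by
  rw [Finset.disjoint_left]
  intro a ha hc
  simp only [Cw, Sw, mem_filter] at ha hc
  rw [ha.2.1] at hc
  exact absurd hc.2.1 (by simp)

variable (hw : IsDyckF (m+1) w)

lemma wn_eq (i : Fin (2*(m+1))) : wn m w i.val = w i := by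
  simp [wn, i.isLt]

include hw

lemma wdyck_cnt : ∀ k, k ≤ 2*(m+1) → 2 * cntT (wn m w) k ≤ k := by
  intro k hk
  have h2 := hw.2 k
  have e1 : (Finset.univ.filter fun i : Fin (2*(m+1)) => i.val < k ∧ w i = true).card
      = cntT (wn m w) k := by
    rw [show (Finset.univ.filter fun i : Fin (2*(m+1)) => i.val < k ∧ w i = true)
        = (Finset.univ.filter fun i : Fin (2*(m+1)) => i.val < k ∧ wn m w i.val = true) from ?_]
    · rw [finT (2*(m+1)) (wn m w) k true, min_eq_left hk]; rfl
    · apply Finset.filter_congr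
      intro i _
      rw [wn_eq]
  have e2 : (Finset.univ.filter fun i : Fin (2*(m+1)) => i.val < k ∧ w i = false).card
      = k - cntT (wn m w) k := by
    rw [show (Finset.univ.filter fun i : Fin (2*(m+1)) => i.val < k ∧ w i = false)
        = (Finset.univ.filter fun i : Fin (2*(m+1)) => i.val < k ∧ wn m w i.val = false) from ?_]
    · rw [finT (2*(m+1)) (wn m w) k false, min_eq_left hk]
      exact cntF_eq _ _
    · apply Finset.filter_congr
      intro i _
      rw [wn_eq]
  rw [e1, e2] at h2
  have := cntT_le (wn m w) k
  omega

lemma wdyck_total : cntT (wn m w) (2*(m+1)) = m + 1 := by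
  have h1 := hw.1
  rw [show (Finset.univ.filter fun i : Fin (2*(m+1)) => w i = true)
      = (Finset.univ.filter fun i : Fin (2*(m+1)) => wn m w i.val = true) from ?_] at h1
  · rw [finT' (2*(m+1)) (wn m w) true] at h1
    exact h1
  · apply Finset.filter_congr
    intro i _
    rw [wn_eq]

lemma wn_zero : wn m w 0 = false := by
  have h : 2 * cntT (wn m w) (0+1) ≤ 1 := wdyck_cnt hw 1 (by omega)
  cases hv : wn m w 0
  · rfl
  · exfalso
    rw [cntT_succ, cntT_zero, hv] at h
    simp at h

omit hw in
lemma slots_eq (i : ℕ) (h1 : 1 ≤ i) (h2 : i ≤ m) :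
    slot1 (Ow m w) (Cw m w) (Sw m w) i = wn m w (2*i-1) ∧
    slot2 (Ow m w) (Cw m w) (Sw m w) i = wn m w (2*i) := by
  have hO : i ∈ Ow m w ↔ (wn m w (2*i-1) = false ∧ wn m w (2*i) = false) := by
    simp [Ow, Finset.mem_Icc, h1, h2]
  have hC : i ∈ Cw m w ↔ (wn m w (2*i-1) = true ∧ wn m w (2*i) = true) := by
    simp [Cw, Finset.mem_Icc, h1, h2]
  have hS : i ∈ Sw m w ↔ (wn m w (2*i-1) = false ∧ wn m w (2*i) = true) := by
    simp [Sw, Finset.mem_Icc, h1, h2]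
  cases hv1 : wn m w (2*i-1) <;> cases hv2 : wn m w (2*i) <;>
    simp [slot1, slot2, hO, hC, hS, hv1, hv2]

omit hw in
lemma wagree (h0 : wn m w 0 = false) : ∀ k, k ≤ 2*m →
    wrd (Ow m w) (Cw m w) (Sw m w) m k = wn m w k := by
  intro k hk
  rcases Nat.eq_zero_or_pos k with rfl | hpos
  · rw [wrd_zero, h0]
  · set i := (k+1)/2 with hi
    have hi1 : 1 ≤ i := by omega
    have him : i ≤ m := by omega
    rcases Nat.even_or_odd k with ⟨t, ht⟩ | ⟨t, ht⟩
    · have e : k = 2*i := by omega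
      rw [e, wrd_even _ _ _ _ i hi1 him]
      exact (slots_eq i hi1 him).2
    · have e : k = 2*i-1 := by omega
      rw [e, wrd_odd _ _ _ _ i hi1 him]
      exact (slots_eq i hi1 him).1

include hw

lemma wform : ∀ i, i ≤ m → cntT (wn m w) (2*i+1) + oc (Ow m w) i = i + oc (Cw m w) i := by
  intro i hi
  have hcongr : cntT (wn m w) (2*i+1) = cntT (wrd (Ow m w) (Cw m w) (Sw m w) m) (2*i+1) := by
    apply cntT_congr
    intro j hj
    exact (wagree (wn_zero hw) j (by omega)).symm
  rw [hcongr]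
  exact wrd_formula Ow_subset Cw_subset Sw_subset hOC_w hOS_w hCS_w i hi

lemma hbal_w : ∀ i, oc (Cw m w) i ≤ oc (Ow m w) i := by
  have hm : oc (Cw m w) m ≤ oc (Ow m w) m := by
    have h1 := wform hw m le_rfl
    have h2 := wdyck_cnt hw (2*m+1) (by omega)
    omega
  intro i
  rcases le_or_gt i m with h | h
  · have h1 := wform hw i h
    have h2 := wdyck_cnt hw (2*i+1) (by omega)
    omega
  · rw [oc_ge Cw_subset (by omega), oc_ge Ow_subset (by omega)]
    rw [oc_ge Cw_subset le_rfl, oc_ge Ow_subset le_rfl] at hm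
    exact hm

lemma wn_last : wn m w (2*m+1) = true := by
  have htot := wdyck_total hw
  have e : 2*(m+1) = (2*m+1) + 1 := by ring
  rw [e, cntT_succ] at htot
  have h1 := wform hw m le_rfl
  have h2 := hbal_w hw m
  cases hv : wn m w (2*m+1)
  · rw [hv] at htot; simp at htot; omega
  · rfl

lemma hcard_w : (Ow m w).card = (Cw m w).card := by
  have htot := wdyck_total hw
  have e : 2*(m+1) = (2*m+1) + 1 := by ring
  rw [e, cntT_succ, wn_last hw] at htot
  simp at htot
  have h1 := wform hw m le_rfl
  rw [oc_ge Ow_subset le_rfl, oc_ge Cw_subset le_rfl] at h1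
  omega

end Word
end CfgDyck
end
section
open scoped Classical
open Finset
namespace CfgDyck

section Readback
variable {m : ℕ} {O C S : Finset ℕ}
variable (hO : O ⊆ Finset.Icc 1 m) (hC : C ⊆ Finset.Icc 1 m) (hS : S ⊆ Finset.Icc 1 m)
variable (hOC : Disjoint O C) (hOS : Disjoint O S) (hCS : Disjoint C S)

lemma wn_wrd (k : ℕ) (hk : k < 2*(m+1)) :
    wn m (fun i : Fin (2*(m+1)) => wrd O C S m i.val) k = wrd O C S m k := by
  simp [wn, hk]

include hO hC hS hOC hOS hCS

lemma slots_of_wrd {a : ℕ} (h1 : 1 ≤ a) (h2 : a ≤ m) :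
    wn m (fun i : Fin (2*(m+1)) => wrd O C S m i.val) (2*a-1) = slot1 O C S a ∧
    wn m (fun i : Fin (2*(m+1)) => wrd O C S m i.val) (2*a) = slot2 O C S a := by
  rw [wn_wrd (2*a-1) (by omega), wn_wrd (2*a) (by omega)]
  exact ⟨wrd_odd O C S m a h1 h2, wrd_even O C S m a h1 h2⟩

lemma Ow_wrd : Ow m (fun i : Fin (2*(m+1)) => wrd O C S m i.val) = O := by
  ext a
  simp only [Ow, mem_filter, Finset.mem_Icc]
  constructor
  · rintro ⟨⟨h1, h2⟩, hv1, hv2⟩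
    obtain ⟨e1, e2⟩ := slots_of_wrd hO hC hS hOC hOS hCS h1 h2
    rw [e1] at hv1; rw [e2] at hv2
    by_contra haO
    by_cases hC' : a ∈ C
    · simp [slot1, haO, hC'] at hv1
    · by_cases hS' : a ∈ S
      · simp [slot2, haO, hC', hS'] at hv2
      · simp [slot1, haO, hC', hS'] at hv1
  · intro haO
    have hIcc := hO haO
    simp only [Finset.mem_Icc] at hIcc
    obtain ⟨e1, e2⟩ := slots_of_wrd hO hC hS hOC hOS hCS hIcc.1 hIcc.2
    rw [e1, e2]
    refine ⟨hIcc, ?_, ?_⟩ <;> simp [slot1, slot2, haO]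

lemma Cw_wrd : Cw m (fun i : Fin (2*(m+1)) => wrd O C S m i.val) = C := by
  ext a
  simp only [Cw, mem_filter, Finset.mem_Icc]
  constructor
  · rintro ⟨⟨h1, h2⟩, hv1, hv2⟩
    obtain ⟨e1, e2⟩ := slots_of_wrd hO hC hS hOC hOS hCS h1 h2
    rw [e1] at hv1; rw [e2] at hv2
    by_contra haC
    by_cases hO' : a ∈ O
    · simp [slot1, hO'] at hv1
    · by_cases hS' : a ∈ S
      · simp [slot1, hO', haC, hS'] at hv1
      · simp [slot2, hO', haC, hS'] at hv2
  · intro haC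
    have hIcc := hC haC
    simp only [Finset.mem_Icc] at hIcc
    obtain ⟨e1, e2⟩ := slots_of_wrd hO hC hS hOC hOS hCS hIcc.1 hIcc.2
    rw [e1, e2]
    have hO' : a ∉ O := Finset.disjoint_right.mp hOC haC
    refine ⟨hIcc, ?_, ?_⟩ <;> simp [slot1, slot2, hO', haC]

lemma Sw_wrd : Sw m (fun i : Fin (2*(m+1)) => wrd O C S m i.val) = S := by
  ext a
  simp only [Sw, mem_filter, Finset.mem_Icc]
  constructor
  · rintro ⟨⟨h1, h2⟩, hv1, hv2⟩
    obtain ⟨e1, e2⟩ := slots_of_wrd hO hC hS hOC hOS hCS h1 h2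
    rw [e1] at hv1; rw [e2] at hv2
    by_contra haS
    by_cases hO' : a ∈ O
    · simp [slot2, hO'] at hv2
    · by_cases hC' : a ∈ C
      · simp [slot1, hO', hC'] at hv1
      · simp [slot2, hO', hC', haS] at hv2
  · intro haS
    have hIcc := hS haS
    simp only [Finset.mem_Icc] at hIcc
    obtain ⟨e1, e2⟩ := slots_of_wrd hO hC hS hOC hOS hCS hIcc.1 hIcc.2
    rw [e1, e2]
    have hO' : a ∉ O := Finset.disjoint_right.mp hOS haS
    have hC' : a ∉ C := Finset.disjoint_right.mp hCS haS
    refine ⟨hIcc, ?_, ?_⟩ <;> simp [slot1, slot2, hO', hC', haS]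

end Readback

noncomputable def toWord (m : ℕ) (x : Finset (Finset ℕ)) : Fin (2*(m+1)) → Bool :=
  fun i => wrd (Ox m x) (Cx m x) (Sx m x) m i.val

noncomputable def toCfg (m : ℕ) (w : Fin (2*(m+1)) → Bool) : Finset (Finset ℕ) :=
  mkCfg (Ow m w) (Cw m w) (Sw m w)

lemma toWord_isDyck {m : ℕ} {x : Finset (Finset ℕ)} (hx : IsConfig m x) :
    IsDyckF (m+1) (toWord m x) :=
  isDyck_wrd Ox_subset Cx_subset Sx_subset (hOC_x hx) (hOS_x hx) (hCS_x hx)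
    (hbal_x hx) (hcard_x hx)

lemma toCfg_isConfig {m : ℕ} {w : Fin (2*(m+1)) → Bool} (hw : IsDyckF (m+1) w) :
    IsConfig m (toCfg m w) :=
  mkCfg_isConfig Ow_subset Cw_subset Sw_subset hOC_w hOS_w hCS_w (hbal_w hw)

lemma toCfg_toWord {m : ℕ} {x : Finset (Finset ℕ)} (hx : IsConfig m x) :
    toCfg m (toWord m x) = x := by
  unfold toCfg toWord
  rw [Ow_wrd Ox_subset Cx_subset Sx_subset (hOC_x hx) (hOS_x hx) (hCS_x hx),
    Cw_wrd Ox_subset Cx_subset Sx_subset (hOC_x hx) (hOS_x hx) (hCS_x hx),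
    Sw_wrd Ox_subset Cx_subset Sx_subset (hOC_x hx) (hOS_x hx) (hCS_x hx)]
  exact mkCfg_eq hx

lemma toWord_toCfg {m : ℕ} {w : Fin (2*(m+1)) → Bool} (hw : IsDyckF (m+1) w) :
    toWord m (toCfg m w) = w := by
  funext i
  show wrd (Ox m (toCfg m w)) (Cx m (toCfg m w)) (Sx m (toCfg m w)) m i.val = w i
  unfold toCfg
  rw [Ox_mkCfg Ow_subset Cw_subset Sw_subset hOC_w hOS_w hCS_w (hbal_w hw) (hcard_w hw),
    Cx_mkCfg Ow_subset Cw_subset Sw_subset hOC_w hOS_w hCS_w (hbal_w hw),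
    Sx_mkCfg Ow_subset Cw_subset Sw_subset hOC_w hOS_w hCS_w (hbal_w hw)]
  rw [← wn_eq (w := w) i]
  rcases le_or_gt i.val (2*m) with h | h
  · exact wagree (wn_zero hw) i.val h
  · have hival : i.val = 2*m+1 := by have := i.isLt; omega
    rw [hival, wrd_last _ _ _ _ _ le_rfl, wn_last hw]

end CfgDyck

theorem configs_equiv_dyck (n : ℕ) (hn : 1 ≤ n) :
    Nonempty ({x : Finset (Finset ℕ) // IsConfig (n - 1) x} ≃
      {w : Fin (2 * n) → Bool // IsDyckF n w}) := by
  obtain ⟨m, rfl⟩ : ∃ m, n = m + 1 := ⟨n - 1, by omega⟩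
  exact ⟨⟨fun x => ⟨CfgDyck.toWord m x.1, CfgDyck.toWord_isDyck x.2⟩,
    fun w => ⟨CfgDyck.toCfg m w.1, CfgDyck.toCfg_isConfig w.2⟩,
    fun x => Subtype.ext (CfgDyck.toCfg_toWord x.2),
    fun w => Subtype.ext (CfgDyck.toWord_toCfg w.2)⟩⟩
end
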